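/- arXiv:2006.07443 — 2 statements merged into one kernel-verified Lean document; each statement's English description precedes it below -/
import Mathlib

section
/- For every natural number T and every family Y : Fin T → (O → Q → ℝ) of player-2 pure strategies, there exists x* ∈ Δ₁ such that for all x ∈ Δ₁, ∑_{u : Fin T} u₁(x, Y u) ≤ ∑_{u : Fin T} u₁(x*, Y u); i.e., player 1 has a pure best response to any finite uniform mixture of player-2 pure strategies, even though u₁ is discontinuous. -/
/-- Player 1's per-slot payoff in the continuous Blotto game with margin `δ`. -/
noncomputable def blottoC1 (δ w x y : ℝ) : ℝ :=
  if x ≥ y + δ then w else if x ≤ y then -w else 0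

/-- Player 1's utility in the continuous Blotto game. -/
noncomputable def blottoU1 {Q O : Type*} [Fintype Q] [Fintype O]
    (p : O → ℝ) (v : O → Q → ℝ) (δ : ℝ) (x : Q → ℝ) (y : O → Q → ℝ) : ℝ :=
  ∑ o, p o * ∑ q, blottoC1 δ (v o q) (x q) (y o q)

/-- Player 1 has a pure best response in the budget simplex `Δ₁` to any finite
uniform mixture of player-2 pure strategies, despite the discontinuity of `u₁`. -/
theorem blotto_player1_pure_best_response_exists
    {Q O : Type*} [Fintype Q] [Fintype O] [Nonempty Q] [Nonempty O]
    (p : O → ℝ) (v : O → Q → ℝ) (B₁ : ℝ) (hB₁ : 0 < B₁) (δ : ℝ) (hδ : 0 < δ)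
    (T : ℕ) (Y : Fin T → O → Q → ℝ) :
    ∃ xs : Q → ℝ, ((∀ q, xs q ≥ 0) ∧ ∑ q, xs q = B₁) ∧
      ∀ x : Q → ℝ, ((∀ q, x q ≥ 0) ∧ ∑ q, x q = B₁) →
        ∑ u : Fin T, blottoU1 p v δ x (Y u) ≤ ∑ u : Fin T, blottoU1 p v δ xs (Y u) := by
  classical
  set F : (Q → ℝ) → ℝ := fun x => ∑ u : Fin T, blottoU1 p v δ x (Y u) with hF
  set S : Set (Q → ℝ) := {x | (∀ q, x q ≥ 0) ∧ ∑ q, x q = B₁} with hS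
  -- case classification
  set c : (Q → ℝ) → (Fin T → O → Q → Fin 3) := fun x u o q =>
    if x q ≥ Y u o q + δ then 0 else if x q ≤ Y u o q then 1 else 2 with hc
  set H : (Fin T → O → Q → Fin 3) → ℝ := fun f =>
    ∑ u : Fin T, ∑ o, p o * ∑ q,
      (if f u o q = 0 then v o q else if f u o q = 1 then -(v o q) else 0) with hH
  have hFH : ∀ x, F x = H (c x) := by
    intro x
    simp only [hF, hH, blottoU1, blottoC1]
    refine Finset.sum_congr rfl fun u _ => Finset.sum_congr rfl fun o _ => ?_
    congr 1
    refine Finset.sum_congr rfl fun q _ => ?_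
    simp only [hc]
    split_ifs <;> simp_all
  -- image is finite
  have hfin : (F '' S).Finite := by
    have hsub : F '' S ⊆ Set.range H := by
      rintro _ ⟨x, _, rfl⟩
      exact ⟨c x, (hFH x).symm⟩
    exact (Set.finite_range H).subset hsub
  -- image is nonempty
  have hcard : (0:ℝ) < (Fintype.card Q : ℝ) := by
    exact_mod_cast Fintype.card_pos
  have hx0 : (fun _ : Q => B₁ / Fintype.card Q) ∈ S := by
    constructor
    · intro q
      positivity
    · rw [Finset.sum_const, Finset.card_univ, nsmul_eq_mul]
      field_simp
  have hne : (F '' S).Nonempty := ⟨_, _, hx0, rfl⟩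
  obtain ⟨m, hm, hmax⟩ := hfin.exists_maximalFor id _ hne
  obtain ⟨xs, hxsS, hxs⟩ := hm
  refine ⟨xs, hxsS, fun x hxS => ?_⟩
  show F x ≤ F xs
  have h1 : F x ∈ F '' S := ⟨x, hxS, rfl⟩
  by_contra hlt
  push_neg at hlt
  have hle : m ≤ F x := hxs ▸ hlt.le
  have heq : m = F x := le_antisymm hle (hmax h1 hle)
  exact absurd (hxs.trans heq) (ne_of_lt hlt)
end

section
/- For every natural number T and every family X : Fin T → (Q → ℝ) of player-1 pure strategies, there exists a player-2 pure strategy y* (i.e., y* o ∈ Δ₂ for every o) such that for every player-2 pure strategy y, ∑_{u : Fin T} u₂(X u, y) ≤ ∑_{u : Fin T} u₂(X u, y*); i.e., player 2 has a pure best response to any finite uniform mixture of player-1 pure strategies. -/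
/-- Player 2's per-slot payoff in the continuous Blotto game with margin `δ`. -/
noncomputable def blottoC2 (δ w x y : ℝ) : ℝ :=
  if x ≥ y + δ then -w else if x ≤ y then w else 0

/-- Player 2's utility in the continuous Blotto game. -/
noncomputable def blottoU2 {Q O : Type*} [Fintype Q] [Fintype O]
    (p : O → ℝ) (v : O → Q → ℝ) (δ : ℝ) (x : Q → ℝ) (y : O → Q → ℝ) : ℝ :=
  ∑ o, p o * ∑ q, blottoC2 δ (v o q) (x q) (y o q)

/-- Player 2 has a pure best response (an allocation in `Δ₂` for every outcome)
to any finite uniform mixture of player-1 pure strategies. -/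
theorem blotto_player2_pure_best_response_exists
    {Q O : Type*} [Fintype Q] [Fintype O] [Nonempty Q] [Nonempty O]
    (p : O → ℝ) (hp : ∀ o, 0 ≤ p o) (v : O → Q → ℝ)
    (B₂ : ℝ) (hB₂ : 0 < B₂) (δ : ℝ) (hδ : 0 < δ)
    (T : ℕ) (X : Fin T → Q → ℝ) :
    ∃ ys : O → Q → ℝ, (∀ o, (∀ q, ys o q ≥ 0) ∧ ∑ q, ys o q = B₂) ∧
      ∀ y : O → Q → ℝ, (∀ o, (∀ q, y o q ≥ 0) ∧ ∑ q, y o q = B₂) →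
        ∑ u : Fin T, blottoU2 p v δ (X u) y ≤ ∑ u : Fin T, blottoU2 p v δ (X u) ys := by
  classical
  set F : (O → Q → ℝ) → ℝ := fun y => ∑ u : Fin T, blottoU2 p v δ (X u) y with hF
  set Feas : (O → Q → ℝ) → Prop :=
    fun y => ∀ o, (∀ q, y o q ≥ 0) ∧ ∑ q, y o q = B₂ with hFeasdef
  set A : Set ℝ := {r | ∃ y, Feas y ∧ F y = r} with hA
  have hsub : A ⊆ Set.range (fun f : Fin T → O → Q → Fin 3 =>
      ∑ u : Fin T, ∑ o, p o * ∑ q, ![-(v o q), v o q, (0:ℝ)] (f u o q)) := by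
    rintro r ⟨y, hy, rfl⟩
    refine ⟨fun u o q =>
      if X u q ≥ y o q + δ then 0 else if X u q ≤ y o q then 1 else 2, ?_⟩
    simp only [F, blottoU2, blottoC2]
    refine Finset.sum_congr rfl fun u _ => Finset.sum_congr rfl fun o _ => ?_
    congr 1
    refine Finset.sum_congr rfl fun q _ => ?_
    split_ifs <;> simp
  have hfin : A.Finite := (Set.finite_range _).subset hsub
  have hne : A.Nonempty := by
    refine ⟨F (fun _ _ => B₂ / Fintype.card Q), fun _ _ => B₂ / Fintype.card Q, ?_, rfl⟩
    intro o
    constructor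
    · intro q
      positivity
    · rw [Finset.sum_const, Finset.card_univ, nsmul_eq_mul]
      field_simp
  obtain ⟨r, hrA, hmax⟩ := Set.Finite.exists_maximalFor id A hfin hne
  obtain ⟨ys, hys, hFys⟩ := hrA
  refine ⟨ys, hys, fun y hy => ?_⟩
  have hyA : F y ∈ A := ⟨y, hy, rfl⟩
  by_contra h
  push_neg at h
  replace h : F ys < F y := h
  rw [hFys] at h
  have := hmax (j := F y) hyA (le_of_lt h)
  simp only [id] at this
  linarith
end
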